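/- Almost sure decay of the disagreement: Under the differentially private Laplacian consensus dynamics with the stated assumptions, let θ̃(k) = θ(k) − ⟨θ(k)⟩𝟏_n = (I_n − (1/n)𝟏𝟏ᵀ) θ(k) denote the disagreement vector. Then P{ lim_{k→∞} θ̃(k) = 0 } = 1. -/

import Mathlib

open MeasureTheory ProbabilityTheory Filter

/-- The Laplace distribution on `ℝ` with scale `b`, given by the density
`x ↦ (1/(2b)) exp(-|x|/b)` with respect to Lebesgue measure. -/
noncomputable def lap (b : ℝ) : Measure ℝ :=
  volume.withDensity fun x => ENNReal.ofReal ((2 * b)⁻¹ * Real.exp (-|x| / b))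

/-- The average `⟨v⟩ = (1/n) 𝟏ᵀ v` of the components of a vector. -/
noncomputable def ave {n : ℕ} (v : Fin n → ℝ) : ℝ := (∑ i, v i) / n

/-- The state trajectory of the dynamics `θ(k+1) = θ(k) - h L x(k) + S η(k)` with
messages `x(k) = θ(k) + η(k)`, initial state `θ0` and noise sequence `η`. -/
noncomputable def thetaSeq {n : ℕ} (L S : Matrix (Fin n) (Fin n) ℝ) (h : ℝ)
    (θ0 : Fin n → ℝ) (η : ℕ → Fin n → ℝ) : ℕ → Fin n → ℝ
  | 0 => θ0
  | k + 1 =>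
      thetaSeq L S h θ0 η k - h • L.mulVec (thetaSeq L S h θ0 η k + η k)
        + S.mulVec (η k)

open scoped Classical in
/-- The convergence point `θ_∞ = ⟨θ₀⟩ + ∑_{i=1}^n (s_i/n) ∑_{j=0}^∞ η_i(j)`,
set to `⟨θ₀⟩` on the event where some series `∑_{j=0}^∞ η_i(j)` fails to converge. -/
noncomputable def thetaInf {n : ℕ} (θ0 : Fin n → ℝ) (s : Fin n → ℝ)
    (η : ℕ → Fin n → ℝ) : ℝ :=
  if ∀ i, Summable (fun j => η j i) then
    ave θ0 + ∑ i, (s i / n) * ∑' j, η j i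
  else ave θ0

set_option maxHeartbeats 1000000

section Aux
open Real Set
open scoped RealInnerProductSpace ENNReal

lemma geom_decay (ρ : ℝ) (hρ0 : 0 ≤ ρ) (hρ1 : ρ < 1) (u b : ℕ → ℝ)
    (hu : ∀ k, 0 ≤ u k) (hrec : ∀ k, u (k+1) ≤ ρ * u k + b k)
    (hb : Tendsto b atTop (nhds 0)) : Tendsto u atTop (nhds 0) := by
  rw [Metric.tendsto_atTop]
  intro ε hε
  have h1ρ : 0 < 1 - ρ := by linarith
  have hεd : 0 < ε * (1 - ρ) / 2 / 2 := by positivity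
  obtain ⟨N, hN⟩ := (Metric.tendsto_atTop.mp hb) _ hεd
  have hN' : ∀ k ≥ N, b k ≤ ε * (1 - ρ) / 2 / 2 := by
    intro k hk
    have := hN k hk
    rw [Real.dist_eq, sub_zero] at this
    exact (le_abs_self _).trans this.le
  have key : ∀ j, u (N + j) ≤ ρ ^ j * u N + ε / 2 / 2 := by
    intro j
    induction j with
    | zero => simp only [Nat.add_zero, pow_zero, one_mul]; linarith [hεd.le]
    | succ j ih =>
        have h1 : u (N + j + 1) ≤ ρ * u (N + j) + b (N + j) := hrec _
        have h2 : b (N + j) ≤ ε * (1 - ρ) / 2 / 2 := hN' _ (Nat.le_add_right _ _)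
        have h3 : ρ * u (N + j) ≤ ρ * (ρ ^ j * u N + ε / 2 / 2) :=
          mul_le_mul_of_nonneg_left ih hρ0
        have : u (N + (j+1)) ≤ ρ * (ρ ^ j * u N + ε / 2 / 2) + ε * (1 - ρ) / 2 / 2 := by
          calc u (N + (j+1)) = u (N + j + 1) := by ring_nf
            _ ≤ ρ * u (N + j) + b (N + j) := h1
            _ ≤ _ := add_le_add h3 h2
        calc u (N + (j+1)) ≤ ρ * (ρ ^ j * u N + ε / 2 / 2) + ε * (1 - ρ) / 2 / 2 := this
          _ ≤ ρ ^ (j+1) * u N + ε / 2 / 2 := by rw [pow_succ, mul_comm (ρ ^ j) ρ, mul_assoc]; nlinarith [hu N]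
  -- now ρ^j * u N → 0
  have h4 : Tendsto (fun j => ρ ^ j * u N) atTop (nhds 0) := by
    simpa using (tendsto_pow_atTop_nhds_zero_of_lt_one hρ0 hρ1).mul_const (u N)
  obtain ⟨M, hM⟩ := (Metric.tendsto_atTop.mp h4) (ε/2/2) (by positivity)
  refine ⟨N + M, fun k hk => ?_⟩
  have hkN : N + (k - N) = k := by omega
  have hMk : M ≤ k - N := by omega
  have h5 : ρ ^ (k - N) * u N ≤ ε / 2 / 2 := by
    have := hM _ hMk
    rw [Real.dist_eq, sub_zero] at this
    exact (le_abs_self _).trans this.le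
  have h6 : u k ≤ ε / 2 / 2 + ε / 2 / 2 := by
    have := key (k - N); rw [hkN] at this; linarith
  rw [Real.dist_eq, sub_zero, abs_of_nonneg (hu k)]
  linarith


noncomputable def toE {n : ℕ} (v : Fin n → ℝ) : EuclideanSpace ℝ (Fin n) := WithLp.toLp 2 v

lemma toE_apply {n : ℕ} (v : Fin n → ℝ) (i : Fin n) : toE v i = v i := rfl

lemma toE_add {n : ℕ} (v w : Fin n → ℝ) : toE (v + w) = toE v + toE w := rfl

lemma inner_toE {n : ℕ} (v w : Fin n → ℝ) : ⟪toE v, toE w⟫ = ∑ i, v i * w i := by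
  rw [PiLp.inner_apply]; simp [toE, mul_comm]

lemma norm_toE_sq {n : ℕ} (v : Fin n → ℝ) : ‖toE v‖ ^ 2 = ∑ i, v i ^ 2 := by
  rw [← real_inner_self_eq_norm_sq, inner_toE]
  exact Finset.sum_congr rfl (fun i _ => (sq (v i)).symm)

lemma spectral_gap {n : ℕ} (W : Matrix (Fin n) (Fin n) ℝ)
    (hWsym : ∀ i j, W i j = W j i)
    (hrow : ∀ i, ∑ j, W i j = 1)
    (hquad : ∀ v : Fin n → ℝ, (∑ i, v i = 0) → v ≠ 0 →
      |∑ i, v i * W.mulVec v i| < ∑ i, v i ^ 2) :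
    ∃ ρ : ℝ, 0 ≤ ρ ∧ ρ < 1 ∧ ∀ v : Fin n → ℝ, (∑ i, v i = 0) →
      ‖toE (W.mulVec v)‖ ≤ ρ * ‖toE v‖ := by
  classical
  set E := EuclideanSpace ℝ (Fin n)
  -- the operator
  let T : E →ₗ[ℝ] E :=
    { toFun := fun v => toE (W.mulVec v)
      map_add' := fun x y => by
        show toE (W.mulVec (x + y)) = _
        rw [Matrix.mulVec_add]; rfl
      map_smul' := fun c x => by
        show toE (W.mulVec (c • (x : Fin n → ℝ))) = _
        rw [Matrix.mulVec_smul]; rfl }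
  have hT_apply : ∀ v : Fin n → ℝ, T (toE v) = toE (W.mulVec v) := fun _ => rfl
  -- inner product symmetry
  have hTsym : ∀ x y : E, ⟪T x, y⟫ = ⟪x, T y⟫ := by
    intro x y
    rw [show T x = toE (W.mulVec x) from rfl, show T y = toE (W.mulVec y) from rfl]
    rw [show (x : E) = toE (x : Fin n → ℝ) from rfl, show (y : E) = toE (y : Fin n → ℝ) from rfl,
      inner_toE, inner_toE]
    simp only [Matrix.mulVec, dotProduct, Finset.sum_mul, Finset.mul_sum]
    rw [Finset.sum_comm]
    refine Finset.sum_congr rfl fun j _ => Finset.sum_congr rfl fun i _ => ?_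
    rw [hWsym i j, show toE x j = x j from rfl, show toE y i = y i from rfl]; ring
  -- the subspace
  let F : (Fin n → ℝ) →ₗ[ℝ] ℝ :=
    { toFun := fun v => ∑ i, v i
      map_add' := fun x y => by simp [Finset.sum_add_distrib]
      map_smul' := fun c x => by simp [Finset.mul_sum] }
  let U : Submodule ℝ E := LinearMap.ker (F.comp (WithLp.linearEquiv 2 ℝ (Fin n → ℝ)).toLinearMap)
  have hUmem : ∀ v : E, v ∈ U ↔ ∑ i, v i = 0 := fun v => by
    simp [U, LinearMap.mem_ker, F]; rfl
  -- T maps U to U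
  have hTU : ∀ v ∈ U, T v ∈ U := by
    intro v hv
    rw [hUmem] at hv ⊢
    show ∑ i, W.mulVec v i = 0
    simp only [Matrix.mulVec, dotProduct]
    rw [Finset.sum_comm]
    have : ∀ j, ∑ i, W i j * v j = v j := by
      intro j
      rw [← Finset.sum_mul]
      rw [show ∑ i, W i j = 1 from by rw [Finset.sum_congr rfl fun i _ => hWsym i j]; exact hrow j]
      ring
    calc ∑ j, ∑ i, W i j * (v : Fin n → ℝ) j = ∑ j, v j := Finset.sum_congr rfl fun j _ => this j
      _ = 0 := hv
  let T' : U →ₗ[ℝ] U := T.restrict hTU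
  have hT'sym : T'.IsSymmetric := by
    intro u v
    show (inner ℝ (T u.1) v.1 : ℝ) = inner ℝ u.1 (T v.1)
    exact hTsym u.1 v.1
  set m := Module.finrank ℝ U with hm
  have hmrank : Module.finrank ℝ U = m := rfl
  let bas := hT'sym.eigenvectorBasis hmrank
  let μ := hT'sym.eigenvalues hmrank
  -- eigenvalue bound
  have hμ : ∀ i, |μ i| < 1 := by
    intro i
    have he1 : ‖bas i‖ = 1 := bas.orthonormal.1 i
    have heig : T' (bas i) = μ i • bas i := hT'sym.apply_eigenvectorBasis hmrank i
    have hinner : (inner ℝ ((bas i : U) : E) (T ((bas i : U) : E)) : ℝ) = μ i := by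
      have : T ((bas i : U) : E) = ((T' (bas i) : U) : E) := rfl
      rw [this, heig]
      push_cast
      rw [inner_smul_right, real_inner_self_eq_norm_sq]
      rw [show ‖((bas i : U) : E)‖ = ‖bas i‖ from rfl, he1]
      ring
    have hne : (bas i : U) ≠ 0 := by
      intro h0
      rw [h0] at he1; simp at he1
    have hvne : ((bas i : U) : E) ≠ 0 := fun h0 => hne (Subtype.coe_injective h0)
    have hsum0 : ∑ j, ((bas i : U) : E) j = 0 := (hUmem _).mp (bas i).2
    have hq := hquad ((bas i : U) : E) hsum0 (by exact fun h0 => hvne (WithLp.ofLp_injective 2 h0))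
    have hnorm1 : ∑ j, (((bas i : U) : E) j) ^ 2 = 1 := by
      have := norm_toE_sq (((bas i : U) : E) : Fin n → ℝ)
      rw [show toE (((bas i : U) : E) : Fin n → ℝ) = ((bas i : U) : E) from rfl] at this
      rw [← this, show ‖((bas i : U) : E)‖ = ‖bas i‖ from rfl, he1]; norm_num
    have hinner2 : (inner ℝ ((bas i : U) : E) (T ((bas i : U) : E)) : ℝ)
        = ∑ j, ((bas i : U) : E) j * W.mulVec (((bas i : U) : E) : Fin n → ℝ) j := by
      rw [show T ((bas i : U) : E) = toE (W.mulVec (((bas i : U) : E) : Fin n → ℝ)) from rfl,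
        show ((bas i : U) : E) = toE ((((bas i : U) : E)) : Fin n → ℝ) from rfl, inner_toE]
      rfl
    rw [hinner2] at hinner
    rw [hinner] at hq
    rw [hnorm1] at hq
    exact hq
  -- choose ρ
  rcases Nat.eq_zero_or_pos m with hm0 | hmpos
  · refine ⟨1/2, by norm_num, by norm_num, ?_⟩
    intro v hv
    have hU0 : U = ⊥ := Submodule.finrank_eq_zero.mp (hmrank.trans hm0)
    have hvU : toE v ∈ U := (hUmem _).mpr hv
    rw [hU0, Submodule.mem_bot] at hvU
    have hv0 : v = 0 := by funext j; exact congrFun (congrArg (fun (x : E) => (x : Fin n → ℝ)) hvU) j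
    subst hv0
    rw [show W.mulVec 0 = 0 from Matrix.mulVec_zero W]
    simp [show toE (0 : Fin n → ℝ) = (0 : E) from rfl]
  · have hne : (Finset.univ : Finset (Fin m)).Nonempty := by
      rwa [Finset.univ_nonempty_iff, ← Fin.pos_iff_nonempty]
    set ρ := Finset.univ.sup' hne (fun i => |μ i|) with hρ
    have hρ0 : 0 ≤ ρ := by
      obtain ⟨i, _⟩ := hne
      have h1 : |μ i| ≤ ρ := Finset.le_sup' (fun j => |μ j|) (Finset.mem_univ i)
      exact le_trans (abs_nonneg (μ i)) h1
    have hρ1 : ρ < 1 := by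
      rw [hρ, Finset.sup'_lt_iff]
      exact fun i _ => hμ i
    refine ⟨ρ, hρ0, hρ1, ?_⟩
    intro v hv
    set u : U := ⟨toE v, (hUmem _).mpr hv⟩ with hu
    have hTv : toE (W.mulVec v) = ((T' u : U) : E) := rfl
    have hnm : ∀ w : U, ‖w‖ ^ 2 = ∑ i, (bas.repr w i) ^ 2 := by
      intro w
      rw [← bas.repr.norm_map w]
      have := norm_toE_sq (fun i => bas.repr w i)
      rw [show toE (fun i => bas.repr w i) = bas.repr w from rfl] at this
      exact this
    have hrepr : ∀ i, bas.repr (T' u) i = μ i * bas.repr u i :=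
      fun i => hT'sym.eigenvectorBasis_apply_self_apply hmrank u i
    have hsq : ‖T' u‖ ^ 2 ≤ ρ ^ 2 * ‖u‖ ^ 2 := by
      rw [hnm, hnm, Finset.mul_sum]
      refine Finset.sum_le_sum fun i _ => ?_
      rw [hrepr i, mul_pow]
      have h1 : μ i ^ 2 ≤ ρ ^ 2 := by
        rw [← sq_abs (μ i)]
        have h0 : |μ i| ≤ ρ := Finset.le_sup' (fun j => |μ j|) (Finset.mem_univ i)
        exact pow_le_pow_left₀ (abs_nonneg _) h0 2
      nlinarith [sq_nonneg (bas.repr u i)]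
    have hfin : ‖T' u‖ ≤ ρ * ‖u‖ := by
      have h2 : ‖T' u‖ ^ 2 ≤ (ρ * ‖u‖) ^ 2 := by rw [mul_pow]; exact hsq
      have h3 : (0:ℝ) ≤ ρ * ‖u‖ := by positivity
      nlinarith [norm_nonneg (T' u)]
    have e1 : ‖toE (W.mulVec v)‖ = ‖T' u‖ := rfl
    have e2 : ‖toE v‖ = ‖u‖ := rfl
    rw [e1, e2]; exact hfin

lemma det_tendsto {n : ℕ} (hn : 0 < n)
    (A : Matrix (Fin n) (Fin n) ℝ) (hAsymm : A.IsSymm) (hApos : ∀ i j, 0 ≤ A i j)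
    (L : Matrix (Fin n) (Fin n) ℝ)
    (hL : L = Matrix.diagonal (fun i => ∑ j, A i j) - A)
    (hconn : ∀ v : Fin n → ℝ, L.mulVec v = 0 → ∃ a : ℝ, v = fun _ => a)
    (h : ℝ) (hh0 : 0 < h)
    (hh1 : h < 1 / Finset.univ.sup'
      (Finset.univ_nonempty_iff.mpr (Fin.pos_iff_nonempty.mp hn)) (fun i => ∑ j, A i j))
    (s : Fin n → ℝ) (θ0 : Fin n → ℝ) (η : ℕ → Fin n → ℝ)
    (hη : ∀ i, Tendsto (fun k => η k i) atTop (nhds (0:ℝ))) :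
    Tendsto (fun k => fun i => thetaSeq L (Matrix.diagonal s) h θ0 η k i
      - ave (thetaSeq L (Matrix.diagonal s) h θ0 η k)) atTop (nhds 0) := by
  have hnR : (0:ℝ) < n := Nat.cast_pos.mpr hn
  set dmax := Finset.univ.sup'
      (Finset.univ_nonempty_iff.mpr (Fin.pos_iff_nonempty.mp hn)) (fun i => ∑ j, A i j) with hdmax
  have hdsup : ∀ i, ∑ j, A i j ≤ dmax := fun i => Finset.le_sup' (fun i => ∑ j, A i j) (Finset.mem_univ i)
  have hd0 : 0 ≤ dmax := by
    obtain ⟨i⟩ := Fin.pos_iff_nonempty.mp hn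
    exact le_trans (Finset.sum_nonneg fun j _ => hApos i j) (hdsup i)
  have hdpos : 0 < dmax := by
    rcases hd0.lt_or_eq with hlt | heq
    · exact hlt
    · exfalso; rw [← heq] at hh1; simp at hh1; linarith
  have hhd : h * dmax < 1 := by
    rw [lt_div_iff₀ hdpos] at hh1; linarith [hh1]
  have hAs : ∀ i j, A i j = A j i := by
    intro i j
    have := congrFun (congrFun hAsymm j) i
    simpa [Matrix.transpose_apply] using this
  -- basic L facts
  have hLapp : ∀ (v : Fin n → ℝ) i, L.mulVec v i = (∑ j, A i j) * v i - ∑ j, A i j * v j := by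
    intro v i
    rw [hL, Matrix.sub_mulVec]
    simp only [Pi.sub_apply, Matrix.mulVec_diagonal]
    simp [Matrix.mulVec, dotProduct, mul_comm]
  have hswap : ∀ f : Fin n → Fin n → ℝ, ∑ i, ∑ j, A i j * f i j = ∑ i, ∑ j, A i j * f j i := by
    intro f
    rw [Finset.sum_comm]
    exact Finset.sum_congr rfl fun j _ => Finset.sum_congr rfl fun i _ => by rw [hAs i j]
  have hq1 : ∀ v : Fin n → ℝ, 2 * (∑ i, v i * L.mulVec v i) = ∑ i, ∑ j, A i j * (v i - v j)^2 := by
    intro v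
    have e1 : ∑ i, v i * L.mulVec v i
        = ∑ i, ∑ j, A i j * (v i ^ 2 - v i * v j) := by
      refine Finset.sum_congr rfl fun i _ => ?_
      rw [hLapp v i, Finset.sum_mul, mul_sub, Finset.mul_sum, Finset.mul_sum,
        ← Finset.sum_sub_distrib]
      refine Finset.sum_congr rfl fun j _ => ?_
      ring
    rw [e1]
    have e2 : ∑ i, ∑ j, A i j * (v i - v j)^2
        = ∑ i, ∑ j, (A i j * (v i ^2 - v i * v j) + A i j * (v j ^ 2 - v i * v j)) := by
      refine Finset.sum_congr rfl fun i _ => Finset.sum_congr rfl fun j _ => ?_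
      ring
    rw [e2]
    simp only [Finset.sum_add_distrib]
    rw [show ∑ i, ∑ j, A i j * (v j ^ 2 - v i * v j) = ∑ i, ∑ j, A i j * (v i ^2 - v i * v j) from by
      rw [hswap (fun i j => v j ^ 2 - v i * v j)]
      exact Finset.sum_congr rfl fun i _ => Finset.sum_congr rfl fun j _ => by ring]
    ring
  have hqpos : ∀ v : Fin n → ℝ, 0 ≤ ∑ i, v i * L.mulVec v i := by
    intro v
    have h2 := hq1 v
    have : (0:ℝ) ≤ ∑ i, ∑ j, A i j * (v i - v j)^2 :=
      Finset.sum_nonneg fun i _ => Finset.sum_nonneg fun j _ => mul_nonneg (hApos i j) (sq_nonneg _)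
    linarith
  have hqker : ∀ v : Fin n → ℝ, (∑ i, v i * L.mulVec v i) = 0 → L.mulVec v = 0 := by
    intro v hv
    have h2 := hq1 v
    rw [hv, mul_zero] at h2
    have hterm : ∀ i ∈ Finset.univ, ∀ j ∈ Finset.univ, A i j * (v i - v j)^2 = 0 := by
      have houter := (Finset.sum_eq_zero_iff_of_nonneg (fun i _ =>
        Finset.sum_nonneg fun j _ => mul_nonneg (hApos i j) (sq_nonneg _))).mp h2.symm
      intro i hi j hj
      exact (Finset.sum_eq_zero_iff_of_nonneg (fun j _ =>
        mul_nonneg (hApos i j) (sq_nonneg _))).mp (houter i hi) j hj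
    funext i
    rw [hLapp v i]
    have : ∀ j ∈ Finset.univ, A i j * v i - A i j * v j = 0 := by
      intro j hj
      have h3 := hterm i (Finset.mem_univ i) j hj
      rcases mul_eq_zero.mp h3 with h4 | h4
      · rw [h4]; ring
      · have : v i = v j := by nlinarith [sq_nonneg (v i - v j)]
        rw [this]; ring
    have h5 : ∑ j, (A i j * v i - A i j * v j) = 0 := Finset.sum_eq_zero this
    rw [Finset.sum_sub_distrib, ← Finset.sum_mul] at h5
    show (∑ j, A i j) * v i - ∑ j, A i j * v j = 0
    linarith [h5]
  have hqub : ∀ v : Fin n → ℝ, (∑ i, v i * L.mulVec v i) ≤ 2 * dmax * ∑ i, v i ^ 2 := by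
    intro v
    have h2 := hq1 v
    have h3 : ∑ i, ∑ j, A i j * (v i - v j)^2 ≤ ∑ i, ∑ j, A i j * (2 * v i ^2 + 2 * v j ^2) := by
      refine Finset.sum_le_sum fun i _ => Finset.sum_le_sum fun j _ => ?_
      have := sq_nonneg (v i + v j)
      nlinarith [hApos i j, sq_nonneg (v i - v j), sq_nonneg (v i + v j)]
    have h4 : ∑ i, ∑ j, A i j * (2 * v i ^2 + 2 * v j ^2) = ∑ i, ∑ j, A i j * (4 * v i ^ 2) := by
      have e1 : ∑ i, ∑ j, A i j * (2 * v i ^2 + 2 * v j ^2)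
          = ∑ i, ∑ j, (A i j * (2 * v i ^ 2) + A i j * (2 * v j ^2)) := by
        refine Finset.sum_congr rfl fun i _ => Finset.sum_congr rfl fun j _ => by ring
      rw [e1]
      simp only [Finset.sum_add_distrib]
      rw [hswap (fun i j => 2 * v j ^ 2)]
      rw [← Finset.sum_add_distrib]
      refine Finset.sum_congr rfl fun i _ => ?_
      rw [← Finset.sum_add_distrib]
      refine Finset.sum_congr rfl fun j _ => by ring
    have h5 : ∑ i, ∑ j, A i j * (4 * v i ^ 2) ≤ ∑ i, 4 * dmax * v i ^ 2 := by
      refine Finset.sum_le_sum fun i _ => ?_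
      rw [show ∑ j, A i j * (4 * v i ^2) = (∑ j, A i j) * (4 * v i ^ 2) from
        (Finset.sum_mul _ _ _).symm]
      have := hdsup i
      nlinarith [sq_nonneg (v i), hd0]
    have h6 : ∑ i, 4 * dmax * v i ^ 2 = 4 * dmax * ∑ i, v i ^ 2 := by
      rw [Finset.mul_sum]
    linarith
  -- the matrix W
  set W : Matrix (Fin n) (Fin n) ℝ := 1 - h • L with hW
  have hLs : ∀ i j, L i j = L j i := by
    intro i j
    rw [hL]
    simp only [Matrix.sub_apply, Matrix.diagonal_apply]
    rw [hAs i j]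
    by_cases hij : i = j
    · subst hij; simp
    · simp [hij, Ne.symm hij]
  have hWsym : ∀ i j, W i j = W j i := by
    intro i j
    simp only [hW, Matrix.sub_apply, Matrix.smul_apply, Matrix.one_apply, smul_eq_mul]
    rw [hLs i j]
    by_cases hij : i = j
    · subst hij; simp
    · simp [hij, Ne.symm hij]
  have hLrow : ∀ i, ∑ j, L i j = 0 := by
    intro i
    rw [hL]
    simp only [Matrix.sub_apply, Finset.sum_sub_distrib]
    rw [show ∑ j, Matrix.diagonal (fun i => ∑ j, A i j) i j = ∑ j, A i j from by
      simp [Matrix.diagonal_apply, Finset.sum_ite_eq]]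
    ring
  have hWrow : ∀ i, ∑ j, W i j = 1 := by
    intro i
    simp only [hW, Matrix.sub_apply, Matrix.smul_apply, smul_eq_mul, Finset.sum_sub_distrib]
    rw [← Finset.mul_sum, hLrow i]
    simp [Matrix.one_apply]
  have hWapp : ∀ v : Fin n → ℝ, W.mulVec v = v - h • L.mulVec v := by
    intro v
    rw [hW, Matrix.sub_mulVec, Matrix.one_mulVec, Matrix.smul_mulVec]
  -- quad hypothesis
  have hquad : ∀ v : Fin n → ℝ, (∑ i, v i = 0) → v ≠ 0 →
      |∑ i, v i * W.mulVec v i| < ∑ i, v i ^ 2 := by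
    intro v hv hv0
    have hQpos : 0 < ∑ i, v i ^ 2 := by
      obtain ⟨i, hi⟩ := Function.ne_iff.mp hv0
      refine Finset.sum_pos' (fun j _ => sq_nonneg _) ⟨i, Finset.mem_univ i, ?_⟩
      have := abs_pos.mpr hi
      nlinarith [sq_abs (v i)]
    have hPpos : 0 < ∑ i, v i * L.mulVec v i := by
      rcases (hqpos v).lt_or_eq with hlt | heq
      · exact hlt
      · exfalso
        obtain ⟨a, ha⟩ := hconn v (hqker v heq.symm)
        have hna : (n : ℝ) * a = 0 := by
          have e3 : ∑ i : Fin n, v i = (n : ℝ) * a := by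
            rw [ha]
            rw [Finset.sum_const, Finset.card_univ, Fintype.card_fin, nsmul_eq_mul]
          rw [hv] at e3
          linarith [e3]
        have ha0 : a = 0 := by
          rcases mul_eq_zero.mp hna with h1 | h1
          · exact absurd h1 (Nat.cast_ne_zero.mpr hn.ne')
          · exact h1
        exact hv0 (by rw [ha, ha0]; rfl)
    have heq2 : ∑ i, v i * W.mulVec v i
        = (∑ i, v i ^ 2) - h * ∑ i, v i * L.mulVec v i := by
      rw [Finset.mul_sum, ← Finset.sum_sub_distrib]
      refine Finset.sum_congr rfl fun i _ => ?_
      rw [hWapp v]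
      simp only [Pi.sub_apply, Pi.smul_apply, smul_eq_mul]
      ring
    rw [heq2, abs_lt]
    constructor
    · have h8 : h * (∑ i, v i * L.mulVec v i) ≤ h * (2 * dmax * ∑ i, v i ^ 2) :=
        mul_le_mul_of_nonneg_left (hqub v) hh0.le
      nlinarith
    · nlinarith [mul_pos hh0 hPpos]
  obtain ⟨ρ, hρ0, hρ1, hρ⟩ := spectral_gap W hWsym hWrow hquad
  -- dynamics
  set B : Matrix (Fin n) (Fin n) ℝ := Matrix.diagonal s - h • L with hB
  set θk : ℕ → Fin n → ℝ := thetaSeq L (Matrix.diagonal s) h θ0 η with hθk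
  set d : ℕ → Fin n → ℝ := fun k => fun i => θk k i - ave (θk k) with hd
  set msq : ℕ → Fin n → ℝ := fun k => fun i => B.mulVec (η k) i - ave (B.mulVec (η k)) with hmsq
  have hstep : ∀ k, θk (k+1) = W.mulVec (θk k) + B.mulVec (η k) := by
    intro k
    show θk k - h • L.mulVec (θk k + η k) + (Matrix.diagonal s).mulVec (η k) = _
    rw [Matrix.mulVec_add, hWapp, hB, Matrix.sub_mulVec, Matrix.smul_mulVec]
    funext i
    simp only [Pi.add_apply, Pi.sub_apply, Pi.smul_apply, smul_eq_mul]
    ring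
  have hcolsum : ∀ v : Fin n → ℝ, ∑ i, W.mulVec v i = ∑ i, v i := by
    intro v
    simp only [Matrix.mulVec, dotProduct]
    rw [Finset.sum_comm]
    refine Finset.sum_congr rfl fun j _ => ?_
    rw [← Finset.sum_mul]
    rw [show ∑ i, W i j = 1 from by
      rw [Finset.sum_congr rfl fun i _ => hWsym i j]; exact hWrow j]
    ring
  have hrec : ∀ k, d (k+1) = fun i => W.mulVec (d k) i + msq k i := by
    intro k
    funext i
    show θk (k+1) i - ave (θk (k+1)) = _
    rw [hstep k]
    have hav : ave (W.mulVec (θk k) + B.mulVec (η k))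
        = ave (θk k) + ave (B.mulVec (η k)) := by
      show (∑ i, (W.mulVec (θk k) i + B.mulVec (η k) i)) / n
        = (∑ i, θk k i)/(n:ℝ) + (∑ i, B.mulVec (η k) i)/n
      rw [Finset.sum_add_distrib, hcolsum]
      ring
    have hWd : W.mulVec (d k) i = W.mulVec (θk k) i - ave (θk k) := by
      have e1 : W.mulVec (d k) i = ∑ j, W i j * (θk k j - ave (θk k)) := rfl
      have e2 : ∀ j, W i j * (θk k j - ave (θk k))
          = W i j * θk k j - W i j * ave (θk k) := fun j => by ring
      rw [e1, Finset.sum_congr rfl (fun j _ => e2 j), Finset.sum_sub_distrib,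
        ← Finset.sum_mul, hWrow i, one_mul]
      rfl
    rw [hav, hWd]
    show W.mulVec (θk k) i + B.mulVec (η k) i - _ = _
    ring
  have hdsum : ∀ k, ∑ i, d k i = 0 := by
    intro k
    show ∑ i, (θk k i - ave (θk k)) = 0
    rw [Finset.sum_sub_distrib, Finset.sum_const, Finset.card_univ, Fintype.card_fin,
      nsmul_eq_mul]
    show (∑ i, θk k i) - (n:ℝ) * ((∑ i, θk k i)/(n:ℝ)) = 0
    field_simp
    ring
  set u : ℕ → ℝ := fun k => ‖toE (d k)‖ with hu
  set bb : ℕ → ℝ := fun k => ‖toE (msq k)‖ with hbbdef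
  have hu0 : ∀ k, 0 ≤ u k := fun k => norm_nonneg _
  have hurec : ∀ k, u (k+1) ≤ ρ * u k + bb k := by
    intro k
    have e1 : toE (d (k+1)) = toE (W.mulVec (d k)) + toE (msq k) := by
      rw [hrec k]; rfl
    calc u (k+1) = ‖toE (W.mulVec (d k)) + toE (msq k)‖ := by
          rw [show u (k+1) = ‖toE (d (k+1))‖ from rfl, e1]
      _ ≤ ‖toE (W.mulVec (d k))‖ + ‖toE (msq k)‖ := norm_add_le _ _
      _ ≤ ρ * u k + bb k := add_le_add (hρ (d k) (hdsum k)) le_rfl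
  have hBv : ∀ i, Tendsto (fun k => B.mulVec (η k) i) atTop (nhds 0) := by
    intro i
    have e1 : ∀ k, B.mulVec (η k) i = ∑ j, B i j * η k j := fun k => rfl
    simp only [e1]
    have := tendsto_finset_sum (Finset.univ : Finset (Fin n))
      (fun j _ => ((hη j).const_mul (B i j)))
    simpa using this
  have hmtend : ∀ i, Tendsto (fun k => msq k i) atTop (nhds 0) := by
    intro i
    have have1 : Tendsto (fun k => ave (B.mulVec (η k))) atTop (nhds 0) := by
      have e1 : ∀ k, ave (B.mulVec (η k)) = (∑ j, B.mulVec (η k) j) / (n:ℝ) := fun k => rfl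
      simp only [e1]
      have := (tendsto_finset_sum (Finset.univ : Finset (Fin n))
        (fun j _ => hBv j)).div_const (n:ℝ)
      simpa using this
    have := (hBv i).sub have1
    simpa using this
  have hbb : Tendsto bb atTop (nhds 0) := by
    have h1 : Tendsto (fun k => ∑ i, msq k i ^ 2) atTop (nhds 0) := by
      have := tendsto_finset_sum (Finset.univ : Finset (Fin n))
        (fun i _ => ((hmtend i).pow 2))
      simpa using this
    have e1 : ∀ k, bb k = Real.sqrt (∑ i, msq k i ^ 2) := by
      intro k
      rw [← norm_toE_sq, Real.sqrt_sq (norm_nonneg _)]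
    rw [show bb = fun k => Real.sqrt (∑ i, msq k i ^ 2) from funext e1]
    have := (Real.continuous_sqrt.tendsto 0).comp h1
    simpa [Function.comp_def] using this
  have hutend : Tendsto u atTop (nhds 0) := geom_decay ρ hρ0 hρ1 u bb hu0 hurec hbb
  rw [tendsto_pi_nhds]
  intro i
  have hle : ∀ k, |d k i| ≤ u k := by
    intro k
    have h1 : d k i ^ 2 ≤ u k ^ 2 := by
      rw [show u k = ‖toE (d k)‖ from rfl, norm_toE_sq]
      exact Finset.single_le_sum (fun j _ => sq_nonneg (d k j)) (Finset.mem_univ i)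
    nlinarith [abs_nonneg (d k i), hu0 k, sq_abs (d k i)]
  have hsq : Tendsto (fun k => d k i) atTop (nhds 0) :=
    squeeze_zero_norm (fun k => by rw [Real.norm_eq_abs]; exact hle k) hutend
  simpa using hsq


lemma lapDens_measurable (b : ℝ) :
    Measurable fun x : ℝ => ENNReal.ofReal ((2 * b)⁻¹ * Real.exp (-|x| / b)) := by
  measurability

lemma integral_exp_neg_rate (b ε : ℝ) (hb : 0 < b) :
    ∫ x in Ioi ε, Real.exp (-b⁻¹ * x) = b * Real.exp (-b⁻¹ * ε) := by
  have hderiv : ∀ x ∈ Ici ε, HasDerivAt (fun x => -b * Real.exp (-b⁻¹ * x))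
      (Real.exp (-b⁻¹ * x)) x := by
    intro x _
    have h1 : HasDerivAt (fun x : ℝ => -b⁻¹ * x) (-b⁻¹) x := by
      simpa using (hasDerivAt_id x).const_mul (-b⁻¹)
    have h2 := (h1.exp).const_mul (-b)
    refine h2.congr_deriv ?_
    have hbb : b * b⁻¹ = 1 := mul_inv_cancel₀ hb.ne'
    linear_combination (Real.exp (-b⁻¹ * x)) * hbb
  have hint : IntegrableOn (fun x => Real.exp (-b⁻¹ * x)) (Ioi ε) :=
    exp_neg_integrableOn_Ioi ε (inv_pos.mpr hb)
  have htend : Tendsto (fun x => -b * Real.exp (-b⁻¹ * x)) atTop (nhds 0) := by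
    have h3 : Tendsto (fun x : ℝ => -b⁻¹ * x) atTop atBot :=
      tendsto_id.const_mul_atTop_of_neg (by simpa using inv_pos.mpr hb)
    have h4 := Real.tendsto_exp_atBot.comp h3
    have := h4.const_mul (-b)
    simpa using this
  have := integral_Ioi_of_hasDerivAt_of_tendsto' hderiv hint htend
  rw [this]
  ring

lemma tail_Ici (b ε : ℝ) (hb : 0 < b) (hε : 0 < ε) :
    ∫⁻ x in Ici ε, ENNReal.ofReal ((2 * b)⁻¹ * Real.exp (-|x| / b))
      ≤ ENNReal.ofReal (Real.exp (-ε / b)) := by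
  have hcong : ∫⁻ x in Ici ε, ENNReal.ofReal ((2 * b)⁻¹ * Real.exp (-|x| / b))
      = ∫⁻ x in Ici ε, ENNReal.ofReal ((2 * b)⁻¹ * Real.exp (-b⁻¹ * x)) := by
    refine setLIntegral_congr_fun measurableSet_Ici (fun x hx => ?_)
    rw [abs_of_nonneg (le_trans hε.le hx)]
    congr 2
    field_simp
  rw [hcong]
  have hint : IntegrableOn (fun x => (2 * b)⁻¹ * Real.exp (-b⁻¹ * x)) (Ici ε) := by
    have h1 : IntegrableOn (fun x => Real.exp (-b⁻¹ * x)) (Ioi ε) :=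
      exp_neg_integrableOn_Ioi ε (inv_pos.mpr hb)
    have h2 : IntegrableOn (fun x => Real.exp (-b⁻¹ * x)) (Ici ε) := by
      rwa [integrableOn_Ici_iff_integrableOn_Ioi]
    exact h2.const_mul _
  rw [← ofReal_integral_eq_lintegral_ofReal hint
    (ae_of_all _ fun x => by positivity)]
  refine ENNReal.ofReal_le_ofReal ?_
  have hval : ∫ x in Ici ε, (2 * b)⁻¹ * Real.exp (-b⁻¹ * x)
      = (2 * b)⁻¹ * (b * Real.exp (-b⁻¹ * ε)) := by
    rw [integral_const_mul, integral_Ici_eq_integral_Ioi,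
      integral_exp_neg_rate b ε hb]
  rw [hval]
  have he : Real.exp (-b⁻¹ * ε) = Real.exp (-ε / b) := by
    congr 1; field_simp
  rw [he]
  have h3 : (2 * b)⁻¹ * b = 1/2 := by field_simp
  calc (2*b)⁻¹ * (b * Real.exp (-ε/b)) = ((2*b)⁻¹ * b) * Real.exp (-ε/b) := by ring
    _ = (1/2) * Real.exp (-ε/b) := by rw [h3]
    _ ≤ Real.exp (-ε/b) := by nlinarith [Real.exp_pos (-ε/b)]

lemma tail_Iic (b ε : ℝ) (hb : 0 < b) (hε : 0 < ε) :
    ∫⁻ x in Iic (-ε), ENNReal.ofReal ((2 * b)⁻¹ * Real.exp (-|x| / b))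
      ≤ ENNReal.ofReal (Real.exp (-ε / b)) := by
  set F : ℝ → ENNReal := fun x => ENNReal.ofReal ((2 * b)⁻¹ * Real.exp (-|x| / b)) with hF
  have hFm : Measurable F := lapDens_measurable b
  have hpre : (Neg.neg : ℝ → ℝ) ⁻¹' (Iic (-ε)) = Ici ε := by
    ext x; simp
  have hmap : Measure.map (Neg.neg : ℝ → ℝ) (volume : Measure ℝ) = volume :=
    (Measure.measurePreserving_neg _).map_eq
  have key : ∫⁻ x in Iic (-ε), F x = ∫⁻ x in Ici ε, F (-x) := by
    conv_lhs => rw [← hmap]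
    rw [Measure.restrict_map measurable_neg measurableSet_Iic,
      lintegral_map hFm measurable_neg, hpre]
  rw [key]
  have : ∀ x, F (-x) = F x := fun x => by simp [hF, abs_neg]
  simp_rw [this]
  exact tail_Ici b ε hb hε

lemma lap_tail (b ε : ℝ) (hb : 0 < b) (hε : 0 < ε) :
    lap b {x : ℝ | ε ≤ |x|} ≤ ENNReal.ofReal (2 * Real.exp (-ε / b)) := by
  have hmeasS : MeasurableSet {x : ℝ | ε ≤ |x|} :=
    measurableSet_le measurable_const measurable_abs
  rw [lap, withDensity_apply _ hmeasS]
  have hsub : {x : ℝ | ε ≤ |x|} ⊆ Iic (-ε) ∪ Ici ε := by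
    intro x hx
    simp only [mem_setOf_eq] at hx
    rcases le_or_gt 0 x with h1 | h1
    · right; rw [abs_of_nonneg h1] at hx; exact hx
    · left; rw [abs_of_neg h1] at hx; simp only [mem_Iic]; linarith
  calc ∫⁻ x in {x : ℝ | ε ≤ |x|}, ENNReal.ofReal ((2 * b)⁻¹ * Real.exp (-|x| / b))
      ≤ ∫⁻ x in Iic (-ε) ∪ Ici ε, ENNReal.ofReal ((2 * b)⁻¹ * Real.exp (-|x| / b)) :=
        lintegral_mono_set hsub
    _ ≤ (∫⁻ x in Iic (-ε), ENNReal.ofReal ((2 * b)⁻¹ * Real.exp (-|x| / b)))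
        + ∫⁻ x in Ici ε, ENNReal.ofReal ((2 * b)⁻¹ * Real.exp (-|x| / b)) :=
        lintegral_union_le _ _ _
    _ ≤ ENNReal.ofReal (Real.exp (-ε / b)) + ENNReal.ofReal (Real.exp (-ε / b)) :=
        add_le_add (tail_Iic b ε hb hε) (tail_Ici b ε hb hε)
    _ = ENNReal.ofReal (2 * Real.exp (-ε / b)) := by
        rw [← ENNReal.ofReal_add (by positivity) (by positivity)]
        congr 1; ring

lemma coord_tendsto {n : ℕ} (c q : Fin n → ℝ)
    (hc : ∀ i, 0 < c i) (hq0 : ∀ i, 0 < q i) (hq1 : ∀ i, q i < 1)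
    (P : Measure (ℕ → Fin n → ℝ)) [IsProbabilityMeasure P]
    (hlaw : ∀ (k : ℕ) (i : Fin n),
      Measure.map (fun ω : ℕ → Fin n → ℝ => ω k i) P = lap (c i * q i ^ k)) :
    ∀ᵐ ω ∂P, ∀ i, Tendsto (fun k => ω k i) atTop (nhds (0:ℝ)) := by
  have hev : ∀ (k : ℕ) (i : Fin n), Measurable fun ω : ℕ → Fin n → ℝ => ω k i :=
    fun k i => (measurable_pi_apply i).comp (measurable_pi_apply k)
  have hmeasS : ∀ ε : ℝ, MeasurableSet {x : ℝ | ε ≤ |x|} :=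
    fun ε => measurableSet_le measurable_const measurable_abs
  have key : ∀ (i : Fin n) (ε : ℝ), 0 < ε →
      ∀ᵐ ω ∂P, ∀ᶠ k in atTop, |ω k i| < ε := by
    intro i ε hε
    set S : ℕ → Set (ℕ → Fin n → ℝ) :=
      fun k => (fun ω : ℕ → Fin n → ℝ => ω k i) ⁻¹' {x | ε ≤ |x|} with hS
    have hPS : ∀ k, P (S k) ≤ ENNReal.ofReal ((2 * c i / ε)) * ENNReal.ofReal (q i) ^ k := by
      intro k
      have hb : 0 < c i * q i ^ k := mul_pos (hc i) (pow_pos (hq0 i) k)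
      have h1 : P (S k) = lap (c i * q i ^ k) {x | ε ≤ |x|} := by
        rw [hS]
        rw [← Measure.map_apply (hev k i) (hmeasS ε), hlaw k i]
      rw [h1]
      refine le_trans (lap_tail _ ε hb hε) ?_
      have h2 : Real.exp (-ε / (c i * q i ^ k)) ≤ (c i * q i ^ k) / ε := by
        set t := ε / (c i * q i ^ k) with ht
        have htpos : 0 < t := by positivity
        have h3 : t ≤ Real.exp t := (Real.add_one_le_exp t).trans' (by linarith)
        have h4 : (Real.exp t)⁻¹ ≤ t⁻¹ := by
          apply inv_anti₀ htpos h3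
        have h5 : Real.exp (-ε / (c i * q i ^ k)) = (Real.exp t)⁻¹ := by
          rw [ht, ← Real.exp_neg]; congr 1; ring
        rw [h5]
        calc (Real.exp t)⁻¹ ≤ t⁻¹ := h4
          _ = (c i * q i ^ k) / ε := by rw [ht]; rw [inv_div]
      calc ENNReal.ofReal (2 * Real.exp (-ε / (c i * q i ^ k)))
          ≤ ENNReal.ofReal (2 * ((c i * q i ^ k) / ε)) := by
            refine ENNReal.ofReal_le_ofReal ?_
            nlinarith
        _ = ENNReal.ofReal ((2 * c i / ε) * q i ^ k) := by congr 1; ring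
        _ = ENNReal.ofReal (2 * c i / ε) * ENNReal.ofReal (q i ^ k) := by
            rw [ENNReal.ofReal_mul (div_nonneg (by nlinarith [hc i]) hε.le)]
        _ = ENNReal.ofReal (2 * c i / ε) * ENNReal.ofReal (q i) ^ k := by
            rw [ENNReal.ofReal_pow (hq0 i).le]
    have hsum : ∑' k, P (S k) ≠ ⊤ := by
      refine ne_top_of_le_ne_top ?_ (ENNReal.tsum_le_tsum hPS)
      rw [ENNReal.tsum_mul_left, ENNReal.tsum_geometric]
      refine ENNReal.mul_ne_top ENNReal.ofReal_ne_top ?_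
      refine ENNReal.inv_ne_top.mpr ?_
      have : ENNReal.ofReal (q i) < 1 := ENNReal.ofReal_lt_one.mpr (hq1 i)
      exact (tsub_pos_of_lt this).ne'
    have := ae_eventually_notMem hsum
    filter_upwards [this] with ω hω
    filter_upwards [hω] with k hk
    rw [hS] at hk
    simp only [Set.mem_preimage, Set.mem_setOf_eq] at hk
    linarith [not_le.mp hk]
  have hall : ∀ᵐ ω ∂P, ∀ (i : Fin n) (m : ℕ), ∀ᶠ k in atTop, |ω k i| < 1/((m:ℝ)+1) := by
    rw [ae_all_iff]
    intro i
    rw [ae_all_iff]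
    intro m
    exact key i (1/((m:ℝ)+1)) (by positivity)
  filter_upwards [hall] with ω hω
  intro i
  rw [Metric.tendsto_atTop]
  intro ε hε
  obtain ⟨m, hm⟩ := exists_nat_one_div_lt hε
  obtain ⟨N, hN⟩ := eventually_atTop.mp (hω i m)
  refine ⟨N, fun k hk => ?_⟩
  rw [Real.dist_eq, sub_zero]
  exact lt_trans (hN k hk) hm

end Aux

/-- **Almost sure decay of the disagreement.** The disagreement vector
`θ̃(k) = θ(k) - ⟨θ(k)⟩𝟏` converges to `0` with probability one. -/
theorem disagreement_tendsto_zero {n : ℕ} (hn : 0 < n)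
    (A : Matrix (Fin n) (Fin n) ℝ) (hAsymm : A.IsSymm) (hApos : ∀ i j, 0 ≤ A i j)
    (L : Matrix (Fin n) (Fin n) ℝ)
    (hL : L = Matrix.diagonal (fun i => ∑ j, A i j) - A)
    (hconn : ∀ v : Fin n → ℝ, L.mulVec v = 0 → ∃ a : ℝ, v = fun _ => a)
    (h : ℝ) (hh0 : 0 < h)
    (hh1 : h < 1 / Finset.univ.sup'
      (Finset.univ_nonempty_iff.mpr (Fin.pos_iff_nonempty.mp hn)) (fun i => ∑ j, A i j))
    (s c q : Fin n → ℝ) (hs : ∀ i, s i ∈ Set.Ioo (0 : ℝ) 2)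
    (hc : ∀ i, 0 < c i) (hq : ∀ i, q i ∈ Set.Ioo (|s i - 1|) 1)
    (P : Measure (ℕ → Fin n → ℝ)) [IsProbabilityMeasure P]
    (hlaw : ∀ (k : ℕ) (i : Fin n),
      Measure.map (fun ω : ℕ → Fin n → ℝ => ω k i) P = lap (c i * q i ^ k))
    (hind : iIndepFun
      (fun (p : ℕ × Fin n) (ω : ℕ → Fin n → ℝ) => ω p.1 p.2) P)
    (θ0 : Fin n → ℝ) :
    P {ω | Tendsto
        (fun k => fun i => thetaSeq L (Matrix.diagonal s) h θ0 ω k i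
          - ave (thetaSeq L (Matrix.diagonal s) h θ0 ω k))
        atTop (nhds 0)} = 1 := by
  have hq0 : ∀ i, 0 < q i := fun i => (abs_nonneg _).trans_lt (hq i).1
  have hq1 : ∀ i, q i < 1 := fun i => (hq i).2
  have hae := coord_tendsto c q hc hq0 hq1 P hlaw
  set T := {ω : ℕ → Fin n → ℝ | Tendsto
      (fun k => fun i => thetaSeq L (Matrix.diagonal s) h θ0 ω k i
        - ave (thetaSeq L (Matrix.diagonal s) h θ0 ω k)) atTop (nhds 0)} with hT
  have hTc : Tᶜ ⊆ {ω : ℕ → Fin n → ℝ | ¬ ∀ i, Tendsto (fun k => ω k i) atTop (nhds (0:ℝ))} := by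
    intro ω hω hcoord
    exact hω (det_tendsto hn A hAsymm hApos L hL hconn h hh0 hh1 s θ0 ω hcoord)
  have h0 : P {ω : ℕ → Fin n → ℝ | ¬ ∀ i, Tendsto (fun k => ω k i) atTop (nhds (0:ℝ))} = 0 :=
    ae_iff.mp hae
  have hTc0 : P Tᶜ = 0 := le_antisymm ((measure_mono hTc).trans h0.le) (zero_le)
  have h1 : (1 : ENNReal) ≤ P T := by
    have h2 : P Set.univ ≤ P T + P Tᶜ := by
      rw [← Set.union_compl_self T]
      exact measure_union_le _ _
    rw [measure_univ, hTc0, add_zero] at h2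
    exact h2
  exact le_antisymm prob_le_one h1
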